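/- For every integer r with 1 \le r \le a, the formal power series z(x) defined by z(x) = x \exp(z(x)^a) satisfies z(x)^r / r = \sum_{b=0}^\infty ((ab+r)^{b-1}/b!) x^{ab+r}. -/

import Mathlib

open PowerSeries

/-- `expOf f = exp ∘ f` for a power series `f` with zero constant term:
the coefficient of `x^n` is `∑_{m ≤ n} [x^n] (f^m) / m!`. -/
noncomputable def expOf (f : PowerSeries ℚ) : PowerSeries ℚ :=
  PowerSeries.mk fun n =>
    ∑ m ∈ Finset.range (n + 1), (PowerSeries.coeff n (f ^ m)) / Nat.factorial m

lemma coeff_pow_of_lt {f : PowerSeries ℚ} (h0 : PowerSeries.constantCoeff f = 0)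
    {n m : ℕ} (h : n < m) : PowerSeries.coeff n (f ^ m) = 0 := by
  have hdvd : (X : PowerSeries ℚ) ^ m ∣ f ^ m := pow_dvd_pow_of_dvd (X_dvd_iff.mpr h0) m
  exact (X_pow_dvd_iff.mp hdvd) n h

lemma factorial_ne_zero_q (m : ℕ) : ((Nat.factorial m : ℚ)) ≠ 0 := by
  exact_mod_cast Nat.factorial_ne_zero m

lemma coeff_expOf_pow {f : PowerSeries ℚ} (h0 : PowerSeries.constantCoeff f = 0)
    (r : ℕ) : ∀ n : ℕ, PowerSeries.coeff n ((expOf f) ^ r) =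
      ∑ m ∈ Finset.range (n + 1),
        (r : ℚ) ^ m / Nat.factorial m * PowerSeries.coeff n (f ^ m) := by
  induction r with
  | zero =>
    intro n
    rcases Nat.eq_zero_or_pos n with rfl | hn
    · simp
    · rw [pow_zero, coeff_one, if_neg hn.ne']
      rw [Finset.sum_eq_zero]
      intro m hm
      rcases Nat.eq_zero_or_pos m with rfl | hm1
      · simp [coeff_one, hn.ne']
      · simp [zero_pow hm1.ne']
  | succ r ih =>
    intro n
    have step1 : PowerSeries.coeff n ((expOf f) ^ (r+1)) =
        ∑ ij ∈ Finset.HasAntidiagonal.antidiagonal n,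
          (∑ p ∈ Finset.range (n+1), (r:ℚ)^p / Nat.factorial p * PowerSeries.coeff ij.1 (f^p)) *
          (∑ q ∈ Finset.range (n+1), PowerSeries.coeff ij.2 (f^q) / Nat.factorial q) := by
      rw [pow_succ, coeff_mul]
      refine Finset.sum_congr rfl ?_
      rintro ⟨i, j⟩ hij
      rw [Finset.HasAntidiagonal.mem_antidiagonal] at hij
      have hi : i ≤ n := le_of_add_le_left hij.le
      have hj : j ≤ n := le_of_add_le_right hij.le
      congr 1
      · rw [ih i]
        refine Finset.sum_subset (Finset.range_subset_range.mpr (by omega)) ?_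
        intro p hp hpn
        simp only [Finset.mem_range, not_lt] at hpn
        rw [coeff_pow_of_lt h0 (by omega : i < p), mul_zero]
      · rw [expOf, coeff_mk]
        refine Finset.sum_subset (Finset.range_subset_range.mpr (by omega)) ?_
        intro q hq hqn
        simp only [Finset.mem_range, not_lt] at hqn
        rw [coeff_pow_of_lt h0 (by omega : j < q), zero_div]
    have step2 : PowerSeries.coeff n ((expOf f) ^ (r+1)) =
        ∑ p ∈ Finset.range (n+1), ∑ q ∈ Finset.range (n+1),
          (r:ℚ)^p / Nat.factorial p * (1 / Nat.factorial q) *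
            PowerSeries.coeff n (f ^ (p+q)) := by
      rw [step1]
      have expand : ∀ ij ∈ Finset.HasAntidiagonal.antidiagonal n,
          (∑ p ∈ Finset.range (n+1), (r:ℚ)^p / Nat.factorial p * PowerSeries.coeff ij.1 (f^p)) *
          (∑ q ∈ Finset.range (n+1), PowerSeries.coeff ij.2 (f^q) / Nat.factorial q) =
          ∑ p ∈ Finset.range (n+1), ∑ q ∈ Finset.range (n+1),
            (r:ℚ)^p / Nat.factorial p * (1 / Nat.factorial q) *
              (PowerSeries.coeff ij.1 (f^p) * PowerSeries.coeff ij.2 (f^q)) := by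
        intro ij _
        rw [Finset.sum_mul_sum]
        refine Finset.sum_congr rfl fun p _ => Finset.sum_congr rfl fun q _ => ?_
        ring
      rw [Finset.sum_congr rfl expand, Finset.sum_comm]
      refine Finset.sum_congr rfl fun p _ => ?_
      rw [Finset.sum_comm]
      refine Finset.sum_congr rfl fun q _ => ?_
      rw [← Finset.mul_sum, ← coeff_mul, ← pow_add]
    rw [step2]
    have hsq : ∑ p ∈ Finset.range (n+1), ∑ q ∈ Finset.range (n+1),
          (r:ℚ)^p / Nat.factorial p * (1 / Nat.factorial q) *
            PowerSeries.coeff n (f ^ (p+q)) =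
        ∑ x ∈ Finset.range (n+1) ×ˢ Finset.range (n+1),
          (r:ℚ)^x.1 / Nat.factorial x.1 * (1 / Nat.factorial x.2) *
            PowerSeries.coeff n (f ^ (x.1+x.2)) := by
      rw [Finset.sum_product]
    rw [hsq]
    have hbi : ∑ x ∈ (Finset.range (n+1)).biUnion (fun m => Finset.HasAntidiagonal.antidiagonal m),
          (r:ℚ)^x.1 / Nat.factorial x.1 * (1 / Nat.factorial x.2) *
            PowerSeries.coeff n (f ^ (x.1+x.2)) =
        ∑ x ∈ Finset.range (n+1) ×ˢ Finset.range (n+1),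
          (r:ℚ)^x.1 / Nat.factorial x.1 * (1 / Nat.factorial x.2) *
            PowerSeries.coeff n (f ^ (x.1+x.2)) := by
      refine Finset.sum_subset ?_ ?_
      · intro x hx
        simp only [Finset.mem_biUnion, Finset.mem_range, Finset.HasAntidiagonal.mem_antidiagonal] at hx
        obtain ⟨m, hm, hxm⟩ := hx
        simp only [Finset.mem_product, Finset.mem_range]
        omega
      · intro x hx hnx
        simp only [Finset.mem_biUnion, Finset.mem_range, Finset.HasAntidiagonal.mem_antidiagonal] at hnx
        push_neg at hnx
        have hgt : n < x.1 + x.2 := by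
          by_contra hle
          push_neg at hle
          exact (hnx (x.1 + x.2) (by omega)) rfl
        rw [coeff_pow_of_lt h0 hgt, mul_zero]
    rw [← hbi, Finset.sum_biUnion ?hdisj]
    case hdisj =>
      intro i _ j _ hij
      simp only [Finset.disjoint_left, Finset.HasAntidiagonal.mem_antidiagonal]
      intro x hxi hxj
      exact hij (hxi ▸ hxj)
    refine Finset.sum_congr rfl fun m hm => ?_
    rw [Finset.Nat.sum_antidiagonal_eq_sum_range_succ_mk]
    have hrhs : ((r+1 : ℕ) : ℚ)^m = ∑ p ∈ Finset.range (m+1), (r:ℚ)^p * (m.choose p) := by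
      push_cast
      rw [add_pow]
      refine Finset.sum_congr rfl fun p hp => ?_
      rw [one_pow, mul_one]
    rw [hrhs, Finset.sum_div, Finset.sum_mul]
    refine Finset.sum_congr rfl fun p hp => ?_
    simp only [Finset.mem_range, Nat.lt_succ_iff] at hp
    have hpm : p + (m - p) = m := by omega
    rw [hpm]
    have hfact : (m.choose p : ℚ) * (Nat.factorial p) * (Nat.factorial (m-p)) = Nat.factorial m := by
      exact_mod_cast Nat.choose_mul_factorial_mul_factorial hp
    field_simp
    rw [← hfact]
    ring

lemma key_identity (a b s : ℕ) (ha : 0 < a) (hb : 0 < b) (hs : 0 < s)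
    (T : ℕ → ℚ) (hT0 : T 0 = 0)
    (hT : ∀ m, 1 ≤ m → m ≤ b → T m =
      (s:ℚ)^m / Nat.factorial m *
        (((a*m : ℕ):ℚ) * ((a*b : ℕ):ℚ)^(((b-m : ℕ):ℤ)-1) / Nat.factorial (b-m))) :
    ∑ m ∈ Finset.range (b+1), T m
      = (s:ℚ) * ((a*b+s : ℕ):ℚ)^((b:ℤ)-1) / Nat.factorial b := by
  rw [Finset.sum_range_succ', hT0, add_zero]
  have hab : ((a*b : ℕ):ℚ) ≠ 0 := by
    have : 0 < a*b := Nat.mul_pos ha hb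
    exact_mod_cast this.ne'
  -- RHS: convert zpow to nat pow and expand by add_pow
  have hbz : (b:ℤ) - 1 = ((b-1 : ℕ) : ℤ) := by omega
  have hrhs : ((a*b+s : ℕ):ℚ)^((b:ℤ)-1) = ((s:ℚ) + ((a*b:ℕ):ℚ))^(b-1 : ℕ) := by
    rw [hbz, zpow_natCast]
    congr 1
    push_cast
    ring
  rw [hrhs, add_pow]
  have hrange : Finset.range (b-1+1) = Finset.range b := by congr 1; omega
  rw [hrange, Finset.mul_sum, Finset.sum_div]
  refine Finset.sum_congr rfl fun j hj => ?_
  simp only [Finset.mem_range] at hj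
  have hj1 : j ≤ b - 1 := by omega
  rw [hT (j+1) (by omega) (by omega)]
  have hc : b - (j+1) = b - 1 - j := by omega
  rw [hc]
  -- zpow to pow
  have hz1 : ((a*b:ℕ):ℚ)^(((b-1-j : ℕ):ℤ)-1) = ((a*b:ℕ):ℚ)^(b-1-j : ℕ) / ((a*b:ℕ):ℚ) := by
    rw [sub_eq_add_neg, zpow_add₀ hab, zpow_natCast, zpow_neg_one]
    rw [div_eq_mul_inv]
  rw [hz1]
  have h1 : (((b-1).choose j : ℕ) : ℚ) * (Nat.factorial j) * (Nat.factorial (b-1-j))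
      = (Nat.factorial (b-1)) := by exact_mod_cast Nat.choose_mul_factorial_mul_factorial hj1
  have h2 : ((Nat.factorial b : ℕ) : ℚ) = (b:ℚ) * (Nat.factorial (b-1)) := by
    exact_mod_cast (Nat.mul_factorial_pred hb.ne').symm
  have h3 : ((Nat.factorial (j+1) : ℕ) : ℚ) = ((j:ℚ)+1) * (Nat.factorial j) := by
    rw [Nat.factorial_succ]; push_cast; ring
  have hbq : (b:ℚ) ≠ 0 := by exact_mod_cast hb.ne'
  rw [h2, h3]
  push_cast
  field_simp
  linear_combination (-(s:ℚ)^(j+1)) * h1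


/-- If `z` is the formal power series solution of `z = x exp(z^a)` with `z(0) = 0`, then for
`1 ≤ r ≤ a` one has `z^r / r = ∑_{b≥0} ((ab+r)^{b-1}/b!) x^{ab+r}`; equivalently the coefficient
of `x^n` in `z^r` is `r (ab+r)^{b-1}/b!` when `n = ab+r` and `0` otherwise. -/
theorem zSeries_pow_eq (a r : ℕ) (ha : 0 < a) (hr1 : 1 ≤ r) (hr2 : r ≤ a)
    (z : PowerSeries ℚ) (h0 : PowerSeries.constantCoeff z = 0)
    (hz : z = PowerSeries.X * expOf (z ^ a)) :
    ∀ n : ℕ, PowerSeries.coeff n (z ^ r) =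
      if r ≤ n ∧ a ∣ (n - r) then
        (r : ℚ) * (n : ℚ) ^ ((((n - r) / a : ℕ) : ℤ) - 1) / Nat.factorial ((n - r) / a)
      else 0 := by
  have hza : PowerSeries.constantCoeff (z ^ a) = 0 := by
    rw [map_pow, h0, zero_pow ha.ne']
  have key : ∀ n : ℕ, ∀ s : ℕ, 1 ≤ s → PowerSeries.coeff n (z ^ s) =
      if s ≤ n ∧ a ∣ (n - s) then
        (s : ℚ) * (n : ℚ) ^ ((((n - s) / a : ℕ) : ℤ) - 1) / Nat.factorial ((n - s) / a)
      else 0 := by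
    intro n
    induction n using Nat.strong_induction_on with
    | _ n IH =>
    intro s hs
    have hzs : z ^ s = (expOf (z^a)) ^ s * X ^ s := by
      conv_lhs => rw [hz]
      rw [mul_pow, mul_comm]
    rw [hzs, PowerSeries.coeff_mul_X_pow']
    by_cases hsn : s ≤ n
    swap
    · rw [if_neg hsn, if_neg (fun h => hsn h.1)]
    rw [if_pos hsn, coeff_expOf_pow hza s (n-s)]
    by_cases hk0 : n - s = 0
    · -- n = s
      have hns : n = s := by omega
      rw [hk0]
      rw [if_pos ⟨hsn, dvd_zero a⟩]
      rw [Nat.zero_div]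
      rw [Finset.sum_range_one]
      simp only [pow_zero, Nat.factorial_zero, Nat.cast_one, div_one, one_mul,
        PowerSeries.coeff_zero_eq_constantCoeff, map_one, Nat.cast_zero]
      have hnq : (n:ℚ) ≠ 0 := by
        have : 0 < n := by omega
        exact_mod_cast this.ne'
      have hsq' : (n:ℚ) ≠ 0 := hnq
      rw [zero_sub, zpow_neg, zpow_one, hns, ← hns, mul_inv_cancel₀ hnq]
    by_cases hdvd : a ∣ (n - s)
    · obtain ⟨b, hb⟩ := hdvd
      have hbpos : 0 < b := by
        rcases Nat.eq_zero_or_pos b with rfl | h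
        · simp at hb; omega
        · exact h
      have hdiv : (n-s)/a = b := by rw [hb, Nat.mul_div_cancel_left _ ha]
      rw [if_pos ⟨hsn, ⟨b, hb⟩⟩, hdiv]
      have hlt : n - s < n := by omega
      have hsub : Finset.range (b+1) ⊆ Finset.range (n-s+1) := by
        refine Finset.range_subset_range.mpr ?_
        have : b ≤ a * b := Nat.le_mul_of_pos_left b ha
        omega
      have htrunc : ∑ m ∈ Finset.range (n-s+1),
            (s:ℚ)^m / Nat.factorial m * PowerSeries.coeff (n-s) ((z^a) ^ m) =
          ∑ m ∈ Finset.range (b+1),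
            (s:ℚ)^m / Nat.factorial m * PowerSeries.coeff (n-s) ((z^a) ^ m) := by
        refine (Finset.sum_subset hsub ?_).symm
        intro m hm hnm
        simp only [Finset.mem_range, not_lt] at hnm
        have hm1 : 1 ≤ m := by omega
        rw [← pow_mul, IH (n-s) hlt (a*m) (Nat.mul_pos ha hm1)]
        rw [if_neg, mul_zero]
        rintro ⟨hle, -⟩
        have : a * (b+1) ≤ a * m := Nat.mul_le_mul_left a hnm
        have : a * b < a * (b + 1) := by
          have := Nat.mul_le_mul_left a (Nat.le_refl (b+1))
          calc a * b < a * b + a := by omega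
          _ = a * (b+1) := by ring
        omega
      rw [htrunc]
      have hn_eq : n = a*b + s := by
        have := (Nat.sub_eq_iff_eq_add hsn).mp hb
        omega
      have hcast : (n : ℚ) = ((a*b+s : ℕ) : ℚ) := by rw [hn_eq]
      rw [hcast]
      refine key_identity a b s ha hbpos (by omega) _ ?_ ?_
      · simp only [pow_zero, Nat.factorial_zero, Nat.cast_one, div_one, one_mul]
        rw [PowerSeries.coeff_one, if_neg hk0]
      · intro m h1m hmb
        congr 1
        have hmul : a*m + a*(b-m) = a*b := by
          rw [← Nat.mul_add]
          congr 1
          omega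
        have hle : a*m ≤ n - s := by
          rw [hb]; exact Nat.mul_le_mul_left a hmb
        have hsub2 : n - s - a*m = a*(b-m) := by omega
        rw [← pow_mul, IH (n-s) hlt (a*m) (Nat.mul_pos ha h1m)]
        rw [if_pos ⟨hle, hsub2 ▸ Dvd.intro _ rfl⟩]
        rw [hsub2, Nat.mul_div_cancel_left _ ha, hb]
    · rw [if_neg (fun h => hdvd h.2)]
      refine Finset.sum_eq_zero fun m hm => ?_
      rcases Nat.eq_zero_or_pos m with rfl | hm1
      · rw [pow_zero (z^a), PowerSeries.coeff_one, if_neg hk0, mul_zero]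
      · have hlt : n - s < n := by omega
        rw [← pow_mul, IH (n-s) hlt (a*m) (Nat.mul_pos ha hm1)]
        rw [if_neg, mul_zero]
        rintro ⟨hle, c, hc⟩
        exact hdvd ⟨m + c, by rw [Nat.mul_add, ← hc, Nat.add_sub_cancel' hle]⟩
  intro n
  exact key n r hr1
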